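/- arXiv:2209.01730 — 2 statements merged into one kernel-verified Lean document; each statement's English description precedes it below -/
import Mathlib

section
/- Suppose X ∈ ℝ^{n×n} satisfies the NSARE A^T X + X A − X B_u Θ_{n_u} B_u^T X + C^T Θ_{n_y} C = 0, and let H = [[A, −B_u Θ_{n_u} B_u^T], [−C^T Θ_{n_y} C, −A^T]]. Then for every s ∈ ℂ, det(sI − H) = det(sI − A + B_u Θ_{n_u} B_u^T X) · det(sI + A^T − X B_u Θ_{n_u} B_u^T). -/
open Matrix

/-- The block-diagonal matrix `diag(J, J, ..., J)` built from copies of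
`J = [[0,1],[-1,0]]`, of size `m × m` (for `m` even). -/
def Theta (m : ℕ) : Matrix (Fin m) (Fin m) ℝ :=
  Matrix.of fun i j =>
    if i.val % 2 = 0 ∧ j.val = i.val + 1 then (1 : ℝ)
    else if j.val % 2 = 0 ∧ i.val = j.val + 1 then (-1 : ℝ)
    else 0

private lemma mapC_mul {m n o : ℕ} (M : Matrix (Fin m) (Fin n) ℝ)
    (N : Matrix (Fin n) (Fin o) ℝ) :
    (M * N).map Complex.ofReal = M.map Complex.ofReal * N.map Complex.ofReal :=
  Matrix.map_mul (f := Complex.ofRealHom)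

private lemma mapC_add {m n : ℕ} (M N : Matrix (Fin m) (Fin n) ℝ) :
    (M + N).map Complex.ofReal = M.map Complex.ofReal + N.map Complex.ofReal := by
  ext i j; simp

private lemma mapC_sub {m n : ℕ} (M N : Matrix (Fin m) (Fin n) ℝ) :
    (M - N).map Complex.ofReal = M.map Complex.ofReal - N.map Complex.ofReal := by
  ext i j; simp

private lemma mapC_neg {m n : ℕ} (M : Matrix (Fin m) (Fin n) ℝ) :
    (-M).map Complex.ofReal = -(M.map Complex.ofReal) := by
  ext i j; simp

private lemma mapC_zero {m n : ℕ} :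
    ((0 : Matrix (Fin m) (Fin n) ℝ)).map Complex.ofReal = 0 := by
  ext i j; simp

private lemma mapC_transpose {m n : ℕ} (M : Matrix (Fin m) (Fin n) ℝ) :
    Mᵀ.map Complex.ofReal = (M.map Complex.ofReal)ᵀ := Matrix.transpose_map

theorem stmt_5 (n nu ny : ℕ) (hn : Even n) (hn0 : 0 < n)
    (hnu : Even nu) (hnu0 : 0 < nu) (hny : Even ny) (hny0 : 0 < ny)
    (A : Matrix (Fin n) (Fin n) ℝ) (Bu : Matrix (Fin n) (Fin nu) ℝ)
    (C : Matrix (Fin ny) (Fin n) ℝ)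
    (X : Matrix (Fin n) (Fin n) ℝ)
    (hX : Aᵀ * X + X * A - X * Bu * Theta nu * Buᵀ * X + Cᵀ * Theta ny * C = 0)
    (H : Matrix (Fin n ⊕ Fin n) (Fin n ⊕ Fin n) ℝ)
    (hH : H = Matrix.fromBlocks A (-(Bu * Theta nu * Buᵀ))
      (-(Cᵀ * Theta ny * C)) (-Aᵀ))
    (s : ℂ)
    (Ac : Matrix (Fin n) (Fin n) ℂ) (hAc : Ac = A.map Complex.ofReal)
    (Buc : Matrix (Fin n) (Fin nu) ℂ) (hBuc : Buc = Bu.map Complex.ofReal)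
    (Xc : Matrix (Fin n) (Fin n) ℂ) (hXc : Xc = X.map Complex.ofReal) :
    (s • (1 : Matrix (Fin n ⊕ Fin n) (Fin n ⊕ Fin n) ℂ) - H.map Complex.ofReal).det =
      (s • (1 : Matrix (Fin n) (Fin n) ℂ) - Ac +
          Buc * (Theta nu).map Complex.ofReal * Bucᵀ * Xc).det *
        (s • (1 : Matrix (Fin n) (Fin n) ℂ) + Acᵀ -
          Xc * Buc * (Theta nu).map Complex.ofReal * Bucᵀ).det := by
  set Θc : Matrix (Fin nu) (Fin nu) ℂ := (Theta nu).map Complex.ofReal with hΘc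
  set Sc : Matrix (Fin n) (Fin n) ℂ := Buc * Θc * Bucᵀ with hSc
  set Qc : Matrix (Fin n) (Fin n) ℂ := (Cᵀ * Theta ny * C).map Complex.ofReal with hQc
  -- complexified Riccati
  have h2 : (Aᵀ * X + X * A - X * Bu * Theta nu * Buᵀ * X + Cᵀ * Theta ny * C).map
      Complex.ofReal = 0 := by rw [hX]; exact mapC_zero
  simp only [mapC_add, mapC_sub, mapC_mul, mapC_transpose] at h2
  have hRic : Acᵀ * Xc + Xc * Ac - Xc * Sc * Xc + Qc = 0 := by
    rw [hQc, hSc, hΘc, hAc, hBuc, hXc]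
    simp only [mapC_mul, mapC_transpose]
    rw [← h2]
    simp only [Matrix.mul_assoc]
  have hQeq : Qc = Xc * Sc * Xc - Acᵀ * Xc - Xc * Ac := by
    rw [← sub_eq_zero, ← hRic]
    noncomm_ring
  set P : Matrix (Fin n) (Fin n) ℂ := s • (1 : Matrix (Fin n) (Fin n) ℂ) - Ac + Sc * Xc with hP
  set R : Matrix (Fin n) (Fin n) ℂ := s • (1 : Matrix (Fin n) (Fin n) ℂ) + Acᵀ - Xc * Sc with hR
  set T : Matrix (Fin n ⊕ Fin n) (Fin n ⊕ Fin n) ℂ := Matrix.fromBlocks 1 0 Xc 1 with hT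
  set N : Matrix (Fin n ⊕ Fin n) (Fin n ⊕ Fin n) ℂ := Matrix.fromBlocks P Sc 0 R with hN
  have hM : s • (1 : Matrix (Fin n ⊕ Fin n) (Fin n ⊕ Fin n) ℂ) - H.map Complex.ofReal
      = Matrix.fromBlocks (s • 1 - Ac) Sc Qc (s • 1 + Acᵀ) := by
    rw [hH, ← Matrix.fromBlocks_one, Matrix.fromBlocks_map, Matrix.fromBlocks_smul,
      sub_eq_add_neg, Matrix.fromBlocks_neg, Matrix.fromBlocks_add,
      Matrix.fromBlocks_inj]
    refine ⟨?_, ?_, ?_, ?_⟩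
    · rw [hAc]; rw [sub_eq_add_neg]
    · rw [mapC_neg, mapC_mul, mapC_mul, mapC_transpose, hSc, hBuc, hΘc]
      simp
    · rw [mapC_neg, hQc]; simp
    · rw [mapC_neg, mapC_transpose, hAc, neg_neg]
  have key : (s • (1 : Matrix (Fin n ⊕ Fin n) (Fin n ⊕ Fin n) ℂ) - H.map Complex.ofReal) * T
      = T * N := by
    rw [hM, hT, hN, Matrix.fromBlocks_multiply, Matrix.fromBlocks_multiply,
      Matrix.fromBlocks_inj]
    refine ⟨?_, ?_, ?_, ?_⟩
    · rw [hP]; noncomm_ring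
    · simp
    · rw [hP, hQeq]
      simp only [Matrix.mul_smul, Matrix.smul_mul, mul_one, Matrix.mul_one,
        Matrix.one_mul, mul_add, mul_sub, add_mul, sub_mul]
      noncomm_ring
    · rw [hR]; noncomm_ring
  have hdetT : T.det = 1 := by
    rw [hT, Matrix.det_fromBlocks_zero₁₂]
    simp
  have hdetN : N.det = P.det * R.det := by
    rw [hN, Matrix.det_fromBlocks_zero₂₁]
  have hdet : (s • (1 : Matrix (Fin n ⊕ Fin n) (Fin n ⊕ Fin n) ℂ) - H.map Complex.ofReal).det
      = N.det := by
    have h := congrArg Matrix.det key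
    rw [Matrix.det_mul, Matrix.det_mul, hdetT, mul_one, one_mul] at h
    exact h
  rw [hdet, hdetN, hP, hR, hSc]
  simp only [Matrix.mul_assoc]
end

section
/- Suppose X ∈ ℝ^{n×n} is skew-symmetric and satisfies the NSARE A^T X + X A − X B_u Θ_{n_u} B_u^T X + C^T Θ_{n_y} C = 0. Let ω ∈ ℝ be such that iωI − A is invertible (as a complex matrix), and set G := C(iωI − A)⁻¹B_u and N := I + Θ_{n_u} B_u^T X (iωI − A)⁻¹ B_u (complex n_y×n_u and n_u×n_u matrices). Then det(Θ_{n_u} − G^† Θ_{n_y} G) = |det N|²; in particular det(Θ_{n_u} − G^† Θ_{n_y} G) is a nonnegative real number. -/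
open Matrix

lemma theta_apply (m : ℕ) (i j : Fin m) : Theta m i j =
    if i.val % 2 = 0 ∧ j.val = i.val + 1 then (1 : ℝ)
    else if j.val % 2 = 0 ∧ i.val = j.val + 1 then (-1 : ℝ)
    else 0 := rfl

lemma theta_transpose (m : ℕ) : (Theta m)ᵀ = -Theta m := by
  ext i j
  simp only [Matrix.transpose_apply, Matrix.neg_apply, theta_apply]
  split_ifs <;> first | (exfalso; omega) | norm_num

lemma theta_mul_theta (m : ℕ) (hm : Even m) : Theta m * Theta m = -1 := by
  obtain ⟨k, hk⟩ := hm
  ext i j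
  rw [Matrix.mul_apply]
  rcases Nat.even_or_odd i.val with hi | hi
  · have hi2 : i.val % 2 = 0 := Nat.even_iff.mp hi
    have hlt : i.val + 1 < m := by have := i.isLt; omega
    set p : Fin m := ⟨i.val + 1, hlt⟩ with hp
    have hpv : (p : ℕ) = i.val + 1 := rfl
    rw [Finset.sum_eq_single p]
    · have h1 : Theta m i p = 1 := by
        rw [theta_apply]; split_ifs <;> first | (exfalso; omega) | norm_num
      rw [h1, one_mul, theta_apply]
      simp only [Matrix.neg_apply, Matrix.one_apply, Fin.ext_iff]
      split_ifs <;> first | (exfalso; omega) | norm_num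
    · intro b _ hb
      have hbv : b.val ≠ i.val + 1 := fun h => hb (Fin.ext h)
      have : Theta m i b = 0 := by
        rw [theta_apply]; split_ifs <;> first | rfl | (exfalso; omega)
      rw [this, zero_mul]
    · intro h; exact absurd (Finset.mem_univ p) h
  · have hi2 : i.val % 2 = 1 := Nat.odd_iff.mp hi
    set p : Fin m := ⟨i.val - 1, by have := i.isLt; omega⟩ with hp
    have hpv : (p : ℕ) = i.val - 1 := rfl
    rw [Finset.sum_eq_single p]
    · have h1 : Theta m i p = -1 := by
        rw [theta_apply]; split_ifs <;> first | (exfalso; omega) | norm_num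
      rw [h1, theta_apply]
      simp only [Matrix.neg_apply, Matrix.one_apply, Fin.ext_iff]
      split_ifs <;> first | (exfalso; omega) | norm_num
    · intro b _ hb
      have hbv : b.val ≠ i.val - 1 := fun h => hb (Fin.ext h)
      have : Theta m i b = 0 := by
        rw [theta_apply]; split_ifs <;> first | rfl | (exfalso; omega)
      rw [this, zero_mul]
    · intro h; exact absurd (Finset.mem_univ p) h

lemma theta_two_det : (Theta 2).det = 1 := by
  rw [Matrix.det_fin_two]
  simp [theta_apply]

lemma theta_det_aux : ∀ k : ℕ, (Theta (2 * k)).det = 1 := by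
  intro k
  induction k with
  | zero => exact Matrix.det_fin_zero
  | succ k ih =>
    have hblock : Matrix.fromBlocks (Theta (2 * k)) 0 0 (Theta 2) =
        (Theta (2 * k + 2)).submatrix finSumFinEquiv finSumFinEquiv := by
      ext a b
      rcases a with x | x <;> rcases b with y | y <;>
        simp only [Matrix.fromBlocks_apply₁₁, Matrix.fromBlocks_apply₁₂,
          Matrix.fromBlocks_apply₂₁, Matrix.fromBlocks_apply₂₂,
          Matrix.submatrix_apply, finSumFinEquiv_apply_left, finSumFinEquiv_apply_right,
          theta_apply, Fin.coe_castAdd, Fin.coe_natAdd, Matrix.zero_apply] <;>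
        (have hx := x.isLt; have hy := y.isLt;
         split_ifs <;> first | (exfalso; omega) | norm_num)
    have h1 : ((Theta (2 * k + 2)).submatrix finSumFinEquiv finSumFinEquiv).det
        = (Theta (2 * k + 2)).det := Matrix.det_submatrix_equiv_self _ _
    have h2 : (Theta (2 * (k + 1))).det = (Theta (2 * k + 2)).det := rfl
    rw [h2, ← h1, ← hblock, Matrix.det_fromBlocks_zero₂₁, ih, theta_two_det, one_mul]

lemma theta_det (m : ℕ) (hm : Even m) : (Theta m).det = 1 := by
  obtain ⟨k, rfl⟩ := hm
  have := theta_det_aux k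
  rwa [two_mul] at this

section helpers
variable {a b c : Type*}

lemma map_ofReal_mul [Fintype b] (M : Matrix a b ℝ) (N : Matrix b c ℝ) :
    (M * N).map Complex.ofReal = M.map Complex.ofReal * N.map Complex.ofReal :=
  Matrix.map_mul (f := Complex.ofRealHom)

lemma map_ofReal_conjTranspose (M : Matrix a b ℝ) :
    (M.map Complex.ofReal)ᴴ = Mᵀ.map Complex.ofReal := by
  ext i j
  simp [Matrix.conjTranspose_apply, Matrix.map_apply, Complex.conj_ofReal]

lemma map_ofReal_add (M N : Matrix a b ℝ) :
    (M + N).map Complex.ofReal = M.map Complex.ofReal + N.map Complex.ofReal :=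
  Matrix.map_add _ (by push_cast; simp) _ _

lemma map_ofReal_sub (M N : Matrix a b ℝ) :
    (M - N).map Complex.ofReal = M.map Complex.ofReal - N.map Complex.ofReal :=
  Matrix.map_sub _ (by push_cast; simp) _ _

lemma map_ofReal_neg (M : Matrix a b ℝ) :
    (-M).map Complex.ofReal = -(M.map Complex.ofReal) := by
  ext i j; simp [Matrix.map_apply]

lemma map_ofReal_zero : ((0 : Matrix a b ℝ)).map Complex.ofReal = 0 := by
  ext i j; simp [Matrix.map_apply]

lemma map_ofReal_negone [DecidableEq a] : ((-1 : Matrix a a ℝ)).map Complex.ofReal = -1 := by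
  ext i j
  simp [Matrix.map_apply, Matrix.neg_apply, Matrix.one_apply, apply_ite Complex.ofReal]

lemma map_ofReal_det [DecidableEq a] [Fintype a] (M : Matrix a a ℝ) :
    (M.map Complex.ofReal).det = (M.det : ℂ) :=
  (RingHom.map_det Complex.ofRealHom M).symm
end helpers

theorem stmt_12 (n nu ny : ℕ) (hn : Even n) (hn0 : 0 < n)
    (hnu : Even nu) (hnu0 : 0 < nu) (hny : Even ny) (hny0 : 0 < ny)
    (A : Matrix (Fin n) (Fin n) ℝ) (Bu : Matrix (Fin n) (Fin nu) ℝ)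
    (C : Matrix (Fin ny) (Fin n) ℝ)
    (X : Matrix (Fin n) (Fin n) ℝ) (hXskew : Xᵀ = -X)
    (hX : Aᵀ * X + X * A - X * Bu * Theta nu * Buᵀ * X + Cᵀ * Theta ny * C = 0)
    (ω : ℝ)
    (Ac : Matrix (Fin n) (Fin n) ℂ) (hAc : Ac = A.map Complex.ofReal)
    (Buc : Matrix (Fin n) (Fin nu) ℂ) (hBuc : Buc = Bu.map Complex.ofReal)
    (Cc : Matrix (Fin ny) (Fin n) ℂ) (hCc : Cc = C.map Complex.ofReal)
    (Xc : Matrix (Fin n) (Fin n) ℂ) (hXc : Xc = X.map Complex.ofReal)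
    (hs : IsUnit ((Complex.I * ω) • (1 : Matrix (Fin n) (Fin n) ℂ) - Ac).det)
    (G : Matrix (Fin ny) (Fin nu) ℂ)
    (hG : G = Cc * ((Complex.I * ω) • 1 - Ac)⁻¹ * Buc)
    (N : Matrix (Fin nu) (Fin nu) ℂ)
    (hN : N = 1 + (Theta nu).map Complex.ofReal * Bucᵀ * Xc *
      ((Complex.I * ω) • 1 - Ac)⁻¹ * Buc) :
    ((Theta nu).map Complex.ofReal - Gᴴ * (Theta ny).map Complex.ofReal * G).det =
        (Complex.normSq N.det : ℂ) ∧
      ∃ r : ℝ, 0 ≤ r ∧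
        ((Theta nu).map Complex.ofReal - Gᴴ * (Theta ny).map Complex.ofReal * G).det = r := by
  set Tu : Matrix (Fin nu) (Fin nu) ℂ := (Theta nu).map Complex.ofReal with hTu
  set Ty : Matrix (Fin ny) (Fin ny) ℂ := (Theta ny).map Complex.ofReal with hTy
  set S : Matrix (Fin n) (Fin n) ℂ := (Complex.I * ω) • 1 - Ac with hSdef
  -- basic conjTranspose facts
  have hAcH : Acᴴ = Acᵀ := by
    rw [hAc, map_ofReal_conjTranspose, Matrix.transpose_map]
  have hBucH : Bucᴴ = Bucᵀ := by
    rw [hBuc, map_ofReal_conjTranspose, Matrix.transpose_map]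
  have hBucTH : (Bucᵀ)ᴴ = Buc := by
    subst hBuc
    ext i j
    simp [Matrix.conjTranspose_apply, Matrix.transpose_apply, Matrix.map_apply,
      Complex.conj_ofReal]
  have hCcH : Ccᴴ = Ccᵀ := by
    rw [hCc, map_ofReal_conjTranspose, Matrix.transpose_map]
  have hXcH : Xcᴴ = -Xc := by
    rw [hXc, map_ofReal_conjTranspose, hXskew, map_ofReal_neg]
  have hTuH : Tuᴴ = -Tu := by
    rw [hTu, map_ofReal_conjTranspose, theta_transpose, map_ofReal_neg]
  have hTuTu : Tu * Tu = -1 := by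
    rw [hTu, ← map_ofReal_mul, theta_mul_theta nu hnu, map_ofReal_negone]
  have hTudet : Tu.det = 1 := by
    rw [hTu, map_ofReal_det, theta_det nu hnu]; norm_num
  -- S facts
  have hSH : Sᴴ = (-(Complex.I * ω)) • 1 - Acᵀ := by
    rw [hSdef, Matrix.conjTranspose_sub, Matrix.conjTranspose_smul,
      Matrix.conjTranspose_one, hAcH]
    congr 1
    simp [Complex.star_def, star_mul', Complex.conj_I, Complex.conj_ofReal]
  have hSHdet : IsUnit Sᴴ.det := by
    rw [Matrix.det_conjTranspose]; exact hs.star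
  have c1 : ∀ Z : Matrix (Fin n) (Fin nu) ℂ, (Sᴴ)⁻¹ * (Sᴴ * Z) = Z := by
    intro Z; rw [← Matrix.mul_assoc, Matrix.nonsing_inv_mul _ hSHdet, Matrix.one_mul]
  have c2 : ∀ Z : Matrix (Fin n) (Fin nu) ℂ, S * (S⁻¹ * Z) = Z := by
    intro Z; rw [← Matrix.mul_assoc, Matrix.mul_nonsing_inv _ hs, Matrix.one_mul]
  have hinvH : (S⁻¹)ᴴ = (Sᴴ)⁻¹ := Matrix.conjTranspose_nonsing_inv S
  -- mapped NSARE
  have hX' : Acᵀ * Xc + Xc * Ac - Xc * Buc * Tu * Bucᵀ * Xc + Ccᵀ * Ty * Cc = 0 := by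
    have h := congrArg (fun M : Matrix (Fin n) (Fin n) ℝ => M.map Complex.ofReal) hX
    simp only [map_ofReal_add, map_ofReal_sub, map_ofReal_mul, map_ofReal_zero] at h
    rw [hAc, hBuc, hCc, hXc, hTu, hTy]
    simp only [← Matrix.transpose_map]
    exact h
  -- key identity
  have key : Sᴴ * Xc + Xc * S + Xc * Buc * Tu * Bucᵀ * Xc = Ccᵀ * Ty * Cc := by
    have e1 : Sᴴ * Xc + Xc * S = -(Acᵀ * Xc + Xc * Ac) := by
      rw [hSH, hSdef]
      rw [Matrix.sub_mul, Matrix.mul_sub, Matrix.smul_mul, Matrix.mul_smul,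
        Matrix.one_mul, Matrix.mul_one, neg_smul]
      abel
    have e2 : Acᵀ * Xc + Xc * Ac = Xc * Buc * Tu * Bucᵀ * Xc - Ccᵀ * Ty * Cc := by
      have := hX'
      linear_combination (norm := abel) this -- may fail; fallback below
    rw [e1, e2]
    abel
  have h2 : ∀ Z : Matrix (Fin nu) (Fin nu) ℂ, Tu * (Tu * Z) = -Z := by
    intro Z; rw [← Matrix.mul_assoc, hTuTu, Matrix.neg_mul, Matrix.one_mul]
  have hNH : Nᴴ = 1 + Bucᵀ * ((Sᴴ)⁻¹ * (Xc * (Buc * Tu))) := by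
    rw [hN]
    simp only [Matrix.conjTranspose_add, Matrix.conjTranspose_one, Matrix.conjTranspose_mul,
      hBucH, hBucTH, hXcH, hTuH, hinvH, Matrix.mul_neg, Matrix.neg_mul, neg_neg,
      Matrix.mul_assoc]
  have hGH : Gᴴ = Bucᵀ * ((Sᴴ)⁻¹ * Ccᵀ) := by
    rw [hG]
    simp only [Matrix.conjTranspose_mul, hBucH, hCcH, hinvH, Matrix.mul_assoc]
  have keyW : ∀ W : Matrix (Fin n) (Fin nu) ℂ, Ccᵀ * (Ty * (Cc * W)) =
      Sᴴ * (Xc * W) + Xc * (S * W) + Xc * (Buc * (Tu * (Bucᵀ * (Xc * W)))) := by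
    intro W
    have h := congrArg (fun M : Matrix (Fin n) (Fin n) ℂ => M * W) key
    simpa only [Matrix.add_mul, Matrix.mul_assoc] using h.symm
  set T1 : Matrix (Fin nu) (Fin nu) ℂ := Bucᵀ * (Xc * (S⁻¹ * Buc)) with hT1
  set T2 : Matrix (Fin nu) (Fin nu) ℂ := Bucᵀ * ((Sᴴ)⁻¹ * (Xc * Buc)) with hT2
  set T3 : Matrix (Fin nu) (Fin nu) ℂ :=
    Bucᵀ * ((Sᴴ)⁻¹ * (Xc * (Buc * (Tu * (Bucᵀ * (Xc * (S⁻¹ * Buc))))))) with hT3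
  have claimB : Gᴴ * (Ty * G) = T1 + T2 + T3 := by
    rw [hGH, hG, hT1, hT2, hT3]
    simp only [Matrix.mul_assoc]
    rw [keyW (S⁻¹ * Buc)]
    simp only [Matrix.mul_add, c1, c2]
  have claimA : Nᴴ * (Tu * N) = Tu - T1 - T2 - T3 := by
    rw [hNH, hN, hT1, hT2, hT3]
    simp only [Matrix.mul_add, Matrix.add_mul, Matrix.mul_one, Matrix.one_mul,
      Matrix.mul_assoc, h2, Matrix.mul_neg, Matrix.neg_mul, neg_neg, hTuTu]
    abel
  have main : Tu - Gᴴ * Ty * G = Nᴴ * (Tu * N) := by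
    rw [Matrix.mul_assoc, claimB, claimA]; abel
  have hdet : (Tu - Gᴴ * Ty * G).det = (Complex.normSq N.det : ℂ) := by
    rw [main, Matrix.det_mul, Matrix.det_mul, Matrix.det_conjTranspose, hTudet, one_mul,
      Complex.star_def, mul_comm, Complex.mul_conj]
  exact ⟨hdet, Complex.normSq N.det, Complex.normSq_nonneg _, hdet⟩
end
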